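/- Suppose a reward scheme p(s, S) (reward of a player of stake s in pool S, depending only on s and the anonymous stake distribution of S∖{i}) is concave in s on an interval of (0,h), strictly at some point. Then the scheme is not Sybil-proof: there exists a partition with pools S, S₁, S₂ whose residual stake distributions coincide, such that p(a, S) < p(a/2, S₁) + p(a/2, S₂) for some stake a. -/

import Mathlib

/-- An anonymous reward scheme `p s D` (reward of a player of stake `s` in a pool whose
other members' stakes form the multiset `D`) that is nonnegative and concave in the stake
on `(0, h)`, strictly at some point, is not Sybil-proof: some player of stake `a` strictly
gains by splitting her stake in half across two pools with the same residual stake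
distribution `D`. -/
theorem concave_scheme_not_sybil_proof
    (h : ℝ) (hh : 0 < h) (p : ℝ → Multiset ℝ → ℝ)
    (hconc : ∀ D, ConcaveOn ℝ (Set.Ioo 0 h) fun s => p s D)
    (hnonneg : ∀ s D, 0 ≤ p s D)
    (hstrict : ∃ (D : Multiset ℝ) (s₁ s₂ l : ℝ), s₁ ∈ Set.Ioo 0 h ∧ s₂ ∈ Set.Ioo 0 h ∧
        0 < l ∧ l < 1 ∧
        l * p s₁ D + (1 - l) * p s₂ D < p (l * s₁ + (1 - l) * s₂) D) :
    ∃ (a : ℝ) (D : Multiset ℝ), a ∈ Set.Ioo 0 h ∧ p a D < p (a / 2) D + p (a / 2) D := by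
  by_contra hcon
  push_neg at hcon
  obtain ⟨D, s₁, s₂, l, hs₁, hs₂, hl0, hl1, hlt⟩ := hstrict
  set f : ℝ → ℝ := fun s => p s D with hf
  have hH : ∀ a ∈ Set.Ioo 0 h, f (a / 2) + f (a / 2) ≤ f a := fun a ha => hcon a D ha
  have hcc := hconc D
  have hnn : ∀ s, 0 ≤ f s := fun s => hnonneg s D
  -- Step A: chord inequality via concavity and nonnegativity near 0
  have hA : ∀ s u, s ∈ Set.Ioo 0 h → u ∈ Set.Ioo 0 h → s < u → s * f u ≤ u * f s := by
    intro s u hs hu hsu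
    have hpt : ∀ t ∈ Set.Ioo 0 s, (s - t) * f u ≤ (u - t) * f s := by
      intro t ht
      have hts : 0 < t := ht.1
      have htlt : t < s := ht.2
      have hut : 0 < u - t := by linarith
      have htmem : t ∈ Set.Ioo 0 h := ⟨hts, by linarith [hs.2]⟩
      have hlam0 : 0 ≤ (u - s) / (u - t) := div_nonneg (by linarith) hut.le
      have hmu0 : 0 ≤ (s - t) / (u - t) := div_nonneg (by linarith) hut.le
      have hsum : (u - s) / (u - t) + (s - t) / (u - t) = 1 := by
        field_simp
        ring
      have hcomb := hcc.2 htmem hu hlam0 hmu0 hsum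
      simp only [smul_eq_mul] at hcomb
      have hpoint : (u - s) / (u - t) * t + (s - t) / (u - t) * u = s := by
        field_simp
        ring
      rw [hpoint] at hcomb
      have h1 : (s - t) / (u - t) * f u ≤ f s := by
        have := mul_nonneg hlam0 (hnn t)
        linarith
      rw [div_mul_eq_mul_div, div_le_iff₀ hut] at h1
      linarith [h1]
    have h1 : Filter.Tendsto (fun t : ℝ => (s - t) * f u) (nhdsWithin 0 (Set.Ioi 0))
        (nhds (s * f u)) := by
      have : Filter.Tendsto (fun t : ℝ => (s - t) * f u) (nhds 0) (nhds ((s - 0) * f u)) :=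
        ((continuous_const.sub continuous_id).mul continuous_const).tendsto 0
      simpa using this.mono_left nhdsWithin_le_nhds
    have h2 : Filter.Tendsto (fun t : ℝ => (u - t) * f s) (nhdsWithin 0 (Set.Ioi 0))
        (nhds (u * f s)) := by
      have : Filter.Tendsto (fun t : ℝ => (u - t) * f s) (nhds 0) (nhds ((u - 0) * f s)) :=
        ((continuous_const.sub continuous_id).mul continuous_const).tendsto 0
      simpa using this.mono_left nhdsWithin_le_nhds
    have hev : ∀ᶠ t in nhdsWithin 0 (Set.Ioi 0),
        (s - t) * f u ≤ (u - t) * f s := by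
      filter_upwards [Ioo_mem_nhdsGT_of_mem ⟨le_refl (0:ℝ), hs.1⟩] with t ht
      exact hpt t ht
    exact le_of_tendsto_of_tendsto h1 h2 hev
  -- halving equality
  have hE : ∀ a ∈ Set.Ioo 0 h, f a = 2 * f (a / 2) := by
    intro a ha
    have hhalf : a / 2 ∈ Set.Ioo 0 h := ⟨by linarith [ha.1], by linarith [ha.1, ha.2]⟩
    have h1 := hA (a / 2) a hhalf ha (by linarith [ha.1])
    have h2 := hH a ha
    nlinarith [ha.1]
  -- iterated halving
  have hmem2 : ∀ a ∈ Set.Ioo 0 h, ∀ n : ℕ, a / 2 ^ n ∈ Set.Ioo 0 h := by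
    intro a ha n
    have h2n : (1:ℝ) ≤ 2 ^ n := one_le_pow₀ (by norm_num)
    constructor
    · exact div_pos ha.1 (by positivity)
    · calc a / 2 ^ n ≤ a := div_le_self ha.1.le h2n
        _ < h := ha.2
  have hpow : ∀ a ∈ Set.Ioo 0 h, ∀ n : ℕ, f a = 2 ^ n * f (a / 2 ^ n) := by
    intro a ha n
    induction n with
    | zero => simp
    | succ n ih =>
      rw [ih, hE (a / 2 ^ n) (hmem2 a ha n)]
      have : a / 2 ^ n / 2 = a / 2 ^ (n + 1) := by
        rw [pow_succ]; ring
      rw [this]; ring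
  -- linearity relation
  have hC : ∀ x ∈ Set.Ioo 0 h, ∀ y ∈ Set.Ioo 0 h, x ≤ y → y * f x = x * f y := by
    intro x hx y hy hxy
    rcases eq_or_lt_of_le hxy with rfl | hxy
    · ring
    have hge := hA x y hx hy hxy
    obtain ⟨n, hn⟩ := pow_unbounded_of_one_lt (y / x) (by norm_num : (1:ℝ) < 2)
    have h2n : (0:ℝ) < 2 ^ n := by positivity
    have hyn : y / 2 ^ n < x := by
      rw [div_lt_iff₀ h2n]
      rw [div_lt_iff₀ hx.1] at hn
      linarith [hn]
    have hynm : y / 2 ^ n ∈ Set.Ioo 0 h := ⟨div_pos hy.1 h2n, by linarith [hx.2]⟩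
    have h3 := hA (y / 2 ^ n) x hynm hx hyn
    have h4 := mul_le_mul_of_nonneg_left h3 h2n.le
    have h5 : (2:ℝ) ^ n * (y / 2 ^ n * f x) = y * f x := by
      field_simp
    have h6 : (2:ℝ) ^ n * (x * f (y / 2 ^ n)) = x * f y := by
      rw [hpow y hy n]; ring
    rw [h5, h6] at h4
    linarith
  -- finish
  have hm : l * s₁ + (1 - l) * s₂ ∈ Set.Ioo 0 h := by
    constructor
    · nlinarith [mul_pos hl0 hs₁.1, mul_pos (by linarith : (0:ℝ) < 1 - l) hs₂.1]
    · nlinarith [hs₁.2, hs₂.2, mul_pos hl0 hs₁.1]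
  have e₁ : (l * s₁ + (1 - l) * s₂) * f s₁ = s₁ * f (l * s₁ + (1 - l) * s₂) := by
    rcases le_total s₁ (l * s₁ + (1 - l) * s₂) with hle | hle
    · exact hC s₁ hs₁ _ hm hle
    · have := hC _ hm s₁ hs₁ hle; linarith
  have e₂ : (l * s₁ + (1 - l) * s₂) * f s₂ = s₂ * f (l * s₁ + (1 - l) * s₂) := by
    rcases le_total s₂ (l * s₁ + (1 - l) * s₂) with hle | hle
    · exact hC s₂ hs₂ _ hm hle
    · have := hC _ hm s₂ hs₂ hle; linarith
  have key : (l * s₁ + (1 - l) * s₂) * (l * f s₁ + (1 - l) * f s₂)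
      = (l * s₁ + (1 - l) * s₂) * f (l * s₁ + (1 - l) * s₂) := by
    linear_combination l * e₁ + (1 - l) * e₂
  have hlt' := mul_lt_mul_of_pos_left hlt hm.1
  simp only [hf] at key hlt'
  linarith [key, hlt']
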